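/- For any stochastic matrix W from a finite set X to pmfs on a finite set Y and α ∈ (0,1), the order-α Rényi capacity satisfies C_α(W) ≤ C_{1/2}(W)/(1-α). -/

import Mathlib

open Real MeasureTheory Filter

def IsPMF {Y : Type*} [Fintype Y] (W : Y → ℝ) : Prop :=
  (∀ y, 0 ≤ W y) ∧ ∑ y, W y = 1

noncomputable def renyiDiv {Y : Type*} [Fintype Y] (α : ℝ) (W Q : Y → ℝ) : ℝ :=
  if α = 1 then ∑ y, W y * Real.log (W y / Q y)
  else (α - 1)⁻¹ * Real.log (∑ y, W y ^ α * Q y ^ (1 - α))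

open Classical in
/-- Extended-real-valued order-`α` Rényi divergence, taking the value `⊤` when the
divergence is infinite. -/
noncomputable def renyiDivE {Y : Type*} [Fintype Y] (α : ℝ) (W Q : Y → ℝ) : ENNReal :=
  if α = 1 then
    (if ∀ y, Q y = 0 → W y = 0 then ENNReal.ofReal (renyiDiv 1 W Q) else ⊤)
  else
    (if 0 < ∑ y, W y ^ α * Q y ^ (1 - α) then ENNReal.ofReal (renyiDiv α W Q) else ⊤)

/-- The order-`α` tilted pmf `W^α_Q`. -/
noncomputable def tilt {Y : Type*} [Fintype Y] (α : ℝ) (W Q : Y → ℝ) : Y → ℝ :=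
  fun y => Real.exp ((1 - α) * renyiDiv α W Q) * W y ^ α * Q y ^ (1 - α)

/-- The order-`α` Rényi information `I_α(P;W)` (mutual information for `α = 1`). -/
noncomputable def renyiInfo {X Y : Type*} [Fintype X] [Fintype Y] (α : ℝ) (P : X → ℝ)
    (W : X → Y → ℝ) : ℝ :=
  if α = 1 then ∑ x, P x * ∑ y, W x y * Real.log (W x y / (∑ x', P x' * W x' y))
  else (α / (α - 1)) * Real.log (∑ y, (∑ x, P x * W x y ^ α) ^ α⁻¹)

/-- The order-`α` Rényi capacity `C_α(W) = sup_P I_α(P;W)`. -/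
noncomputable def renyiCap {X Y : Type*} [Fintype X] [Fintype Y] (α : ℝ) (W : X → Y → ℝ) : ℝ :=
  sSup {c | ∃ P : X → ℝ, IsPMF P ∧ c = renyiInfo α P W}

/-- The sphere packing exponent `E_sp(R,W)`. -/
noncomputable def spe {X Y : Type*} [Fintype X] [Fintype Y] (R : ℝ) (W : X → Y → ℝ) : ℝ :=
  sSup {e | ∃ α ∈ Set.Ioo (0:ℝ) 1, e = ((1 - α) / α) * (renyiCap α W - R)}

/-- The order-`α` Rényi mean `q_{α,P}`. -/
noncomputable def renyiMean {X Y : Type*} [Fintype X] [Fintype Y] (α : ℝ) (P : X → ℝ)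
    (W : X → Y → ℝ) : Y → ℝ :=
  fun y => (∑ x, P x * W x y ^ α) ^ α⁻¹ / ∑ y', (∑ x, P x * W x y' ^ α) ^ α⁻¹

section AuxRenyi
open Finset

private lemma holder_w {ι : Type*} (s : Finset ι) (w f g : ι → ℝ)
    (hw : ∀ i, 0 ≤ w i) (hf : ∀ i, 0 ≤ f i) (hg : ∀ i, 0 ≤ g i)
    {θ : ℝ} (hθ0 : 0 < θ) (hθ1 : θ < 1) :
    ∑ i ∈ s, w i * (f i ^ θ * g i ^ (1 - θ)) ≤
      (∑ i ∈ s, w i * f i) ^ θ * (∑ i ∈ s, w i * g i) ^ (1 - θ) := by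
  have hθ1' : 0 < 1 - θ := by linarith
  have hpq : Real.HolderConjugate (1/θ) (1/(1-θ)) := by
    rw [Real.holderConjugate_iff]
    constructor
    · rw [lt_div_iff₀ hθ0]; linarith
    · field_simp; ring
  have key := Real.inner_le_Lp_mul_Lq s (fun i => (w i * f i) ^ θ)
      (fun i => (w i * g i) ^ (1 - θ)) hpq
  simp only [one_div_one_div] at key
  have hwf : ∀ i, 0 ≤ w i * f i := fun i => mul_nonneg (hw i) (hf i)
  have hwg : ∀ i, 0 ≤ w i * g i := fun i => mul_nonneg (hw i) (hg i)
  calc ∑ i ∈ s, w i * (f i ^ θ * g i ^ (1 - θ))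
      = ∑ i ∈ s, (w i * f i) ^ θ * (w i * g i) ^ (1 - θ) := by
        refine Finset.sum_congr rfl fun i _ => ?_
        rw [Real.mul_rpow (hw i) (hf i), Real.mul_rpow (hw i) (hg i)]
        have hww : w i ^ θ * w i ^ (1-θ) = w i := by
          rw [← Real.rpow_add' (hw i) (by norm_num)]
          simp
        calc w i * (f i ^ θ * g i ^ (1-θ))
            = (w i ^ θ * w i ^ (1-θ)) * (f i ^ θ * g i ^ (1-θ)) := by rw [hww]
          _ = w i ^ θ * f i ^ θ * (w i ^ (1-θ) * g i ^ (1-θ)) := by ring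
    _ ≤ (∑ i ∈ s, |(w i * f i) ^ θ| ^ (1/θ)) ^ θ *
        (∑ i ∈ s, |(w i * g i) ^ (1-θ)| ^ (1/(1-θ))) ^ (1-θ) := key
    _ = (∑ i ∈ s, w i * f i) ^ θ * (∑ i ∈ s, w i * g i) ^ (1 - θ) := by
        congr 1
        · congr 1
          refine Finset.sum_congr rfl fun i _ => ?_
          rw [abs_of_nonneg (Real.rpow_nonneg (hwf i) _), ← Real.rpow_mul (hwf i),
            mul_one_div_cancel hθ0.ne', Real.rpow_one]
        · congr 1
          refine Finset.sum_congr rfl fun i _ => ?_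
          rw [abs_of_nonneg (Real.rpow_nonneg (hwg i) _), ← Real.rpow_mul (hwg i),
            mul_one_div_cancel hθ1'.ne', Real.rpow_one]

variable {X Y : Type*} [Fintype X] [Fintype Y]

lemma a_nonneg (W : X → Y → ℝ) (hW : ∀ x, IsPMF (W x)) (P : X → ℝ) (hP : IsPMF P)
    (α : ℝ) (y : Y) : 0 ≤ ∑ x, P x * W x y ^ α :=
  Finset.sum_nonneg fun x _ => mul_nonneg (hP.1 x) (Real.rpow_nonneg ((hW x).1 y) α)

lemma sum_b (W : X → Y → ℝ) (hW : ∀ x, IsPMF (W x)) (P : X → ℝ) (hP : IsPMF P) :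
    ∑ y, ∑ x, P x * W x y = 1 := by
  rw [Finset.sum_comm]
  have h : ∀ x, ∑ y, P x * W x y = P x := fun x => by
    rw [← Finset.mul_sum, (hW x).2, mul_one]
  rw [Finset.sum_congr rfl fun x _ => h x, hP.2]

lemma S_le_one (W : X → Y → ℝ) (hW : ∀ x, IsPMF (W x)) (P : X → ℝ) (hP : IsPMF P)
    {α : ℝ} (hα0 : 0 < α) (hα1 : α < 1) :
    ∑ y, (∑ x, P x * W x y ^ α) ^ α⁻¹ ≤ 1 := by
  have hy : ∀ y, (∑ x, P x * W x y ^ α) ^ α⁻¹ ≤ ∑ x, P x * W x y := by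
    intro y
    have h1 := holder_w univ P (fun x => W x y) (fun _ => (1:ℝ)) hP.1
      (fun x => (hW x).1 y) (fun _ => zero_le_one) hα0 hα1
    simp only [Real.one_rpow, mul_one] at h1
    rw [hP.2, Real.one_rpow, mul_one] at h1
    have h2 := Real.rpow_le_rpow (a_nonneg W hW P hP α y) h1 (inv_nonneg.2 hα0.le)
    rwa [← Real.rpow_mul (Finset.sum_nonneg fun x _ => mul_nonneg (hP.1 x) ((hW x).1 y)),
      mul_inv_cancel₀ hα0.ne', Real.rpow_one] at h2
  calc ∑ y, (∑ x, P x * W x y ^ α) ^ α⁻¹ ≤ ∑ y, ∑ x, P x * W x y :=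
        Finset.sum_le_sum fun y _ => hy y
    _ = 1 := sum_b W hW P hP

lemma S_pos (W : X → Y → ℝ) (hW : ∀ x, IsPMF (W x)) (P : X → ℝ) (hP : IsPMF P)
    {α : ℝ} (hα0 : 0 < α) :
    0 < ∑ y, (∑ x, P x * W x y ^ α) ^ α⁻¹ := by
  obtain ⟨x₀, -, hx₀⟩ : ∃ x ∈ univ, (0:ℝ) < P x := by
    apply Finset.exists_lt_of_sum_lt
    rw [hP.2, Finset.sum_const, smul_zero]
    norm_num
  obtain ⟨y₀, -, hy₀⟩ : ∃ y ∈ univ, (0:ℝ) < W x₀ y := by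
    apply Finset.exists_lt_of_sum_lt
    rw [(hW x₀).2, Finset.sum_const, smul_zero]
    norm_num
  refine Finset.sum_pos' (fun y _ => Real.rpow_nonneg (a_nonneg W hW P hP α y) _)
    ⟨y₀, Finset.mem_univ _, Real.rpow_pos_of_pos ?_ _⟩
  refine Finset.sum_pos' (fun x _ => mul_nonneg (hP.1 x) (Real.rpow_nonneg ((hW x).1 y₀) α))
    ⟨x₀, Finset.mem_univ _, mul_pos hx₀ (Real.rpow_pos_of_pos hy₀ α)⟩

lemma key_log (W : X → Y → ℝ) (hW : ∀ x, IsPMF (W x)) (P : X → ℝ) (hP : IsPMF P)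
    {α : ℝ} (hα0 : 0 < α) (hα1 : α < 1) :
    Real.log (∑ y, (∑ x, P x * W x y ^ ((1:ℝ)/2)) ^ ((1:ℝ)/2)⁻¹) ≤
      α * Real.log (∑ y, (∑ x, P x * W x y ^ α) ^ α⁻¹) := by
  set a : Y → ℝ := fun y => ∑ x, P x * W x y ^ α with ha
  set Sa : ℝ := ∑ y, a y ^ α⁻¹ with hSa
  set Sh : ℝ := ∑ y, (∑ x, P x * W x y ^ ((1:ℝ)/2)) ^ ((1:ℝ)/2)⁻¹ with hSh
  have ha_nn : ∀ y, 0 ≤ a y := fun y => a_nonneg W hW P hP α y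
  have hh_nn : ∀ y, 0 ≤ ∑ x, P x * W x y ^ ((1:ℝ)/2) := fun y => a_nonneg W hW P hP _ y
  have hSa1 : Sa ≤ 1 := S_le_one W hW P hP hα0 hα1
  have hSa0 : 0 < Sa := S_pos W hW P hP hα0
  have hSh0 : 0 < Sh := S_pos W hW P hP (by norm_num : (0:ℝ) < 1/2)
  have hlog : Real.log Sa ≤ 0 := Real.log_nonpos hSa0.le hSa1
  have h2 : ((1:ℝ)/2)⁻¹ = (2:ℝ) := by norm_num
  rcases le_or_gt α (1/2) with hle | hgt
  · rcases eq_or_lt_of_le hle with heq | hlt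
    · -- α = 1/2
      subst heq
      have : Real.log Sh ≤ 0 := Real.log_nonpos hSh0.le (S_le_one W hW P hP hα0 hα1)
      linarith
    · -- α < 1/2
      set θ : ℝ := 1/(2*(1-α)) with hθ
      have h1α : (0:ℝ) < 1 - α := by linarith
      have hθ0 : 0 < θ := by positivity
      have hθ1 : θ < 1 := by rw [hθ, div_lt_one (by linarith)]; linarith
      set θ' : ℝ := α/(1-α) with hθ'
      have hθ'0 : 0 < θ' := by positivity
      have hθ'1 : θ' < 1 := by rw [hθ', div_lt_one h1α]; linarith
      set b : Y → ℝ := fun y => ∑ x, P x * W x y with hb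
      have hb_nn : ∀ y, 0 ≤ b y :=
        fun y => Finset.sum_nonneg fun x _ => mul_nonneg (hP.1 x) ((hW x).1 y)
      -- per-y bound
      have hy : ∀ y, (∑ x, P x * W x y ^ ((1:ℝ)/2)) ^ ((1:ℝ)/2)⁻¹ ≤
          (1:ℝ) * ((a y ^ α⁻¹) ^ θ' * b y ^ (1-θ')) := by
        intro y
        have step1 := holder_w univ P (fun x => W x y ^ α) (fun x => W x y) hP.1
          (fun x => Real.rpow_nonneg ((hW x).1 y) α) (fun x => (hW x).1 y) hθ0 hθ1
        have hexp : α * θ + (1-θ) = 1/2 := by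
          rw [hθ]; field_simp; ring
        have e1 : ∀ x, (W x y ^ α) ^ θ * W x y ^ (1-θ) = W x y ^ ((1:ℝ)/2) := by
          intro x
          rw [← Real.rpow_mul ((hW x).1 y), ← Real.rpow_add' ((hW x).1 y) (by rw [hexp]; norm_num),
            hexp]
        simp only [e1] at step1
        -- step1 : ∑ x, P x * W x y ^ (1/2) ≤ a y ^ θ * b y ^ (1-θ)
        have step2 := Real.rpow_le_rpow (hh_nn y) step1 (by norm_num : (0:ℝ) ≤ 2)
        rw [h2]
        refine le_trans step2 (le_of_eq ?_)
        rw [Real.mul_rpow (Real.rpow_nonneg (ha_nn y) θ) (Real.rpow_nonneg (hb_nn y) _),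
          ← Real.rpow_mul (ha_nn y), ← Real.rpow_mul (hb_nn y), one_mul,
          ← Real.rpow_mul (ha_nn y)]
        have eq1 : θ * 2 = α⁻¹ * θ' := by rw [hθ, hθ']; field_simp
        have eq2 : (1 - θ) * 2 = 1 - θ' := by rw [hθ, hθ']; field_simp; ring
        rw [eq1, eq2]
      have step3 := holder_w univ (fun _ => (1:ℝ)) (fun y => a y ^ α⁻¹) b
        (fun _ => zero_le_one) (fun y => Real.rpow_nonneg (ha_nn y) _) hb_nn hθ'0 hθ'1
      simp only [one_mul] at step3
      have hsumb : ∑ y, b y = 1 := sum_b W hW P hP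
      rw [hsumb, Real.one_rpow, mul_one] at step3
      have hSh_le : Sh ≤ Sa ^ θ' := by
        calc Sh ≤ ∑ y, (a y ^ α⁻¹) ^ θ' * b y ^ (1-θ') := by
              refine Finset.sum_le_sum fun y _ => ?_
              have := hy y
              rwa [one_mul] at this
          _ ≤ Sa ^ θ' := step3
      have hlog1 : Real.log Sh ≤ θ' * Real.log Sa := by
        calc Real.log Sh ≤ Real.log (Sa ^ θ') := Real.log_le_log hSh0 hSh_le
          _ = θ' * Real.log Sa := Real.log_rpow hSa0 θ'
      have hαθ' : α ≤ θ' := by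
        rw [hθ', le_div_iff₀ h1α]; nlinarith
      nlinarith [mul_le_mul_of_nonpos_right hαθ' hlog]
  · -- 1/2 < α
    set θ : ℝ := 1/(2*α) with hθ
    have hθ0 : 0 < θ := by positivity
    have hθ1 : θ < 1 := by rw [hθ, div_lt_one (by linarith)]; linarith
    have hy : ∀ y, (∑ x, P x * W x y ^ ((1:ℝ)/2)) ^ ((1:ℝ)/2)⁻¹ ≤ a y ^ α⁻¹ := by
      intro y
      have step1 := holder_w univ P (fun x => W x y ^ α) (fun _ => (1:ℝ)) hP.1
        (fun x => Real.rpow_nonneg ((hW x).1 y) α) (fun _ => zero_le_one) hθ0 hθ1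
      have e1 : ∀ x, (W x y ^ α) ^ θ = W x y ^ ((1:ℝ)/2) := by
        intro x
        rw [← Real.rpow_mul ((hW x).1 y)]
        congr 1
        rw [hθ]; field_simp
      simp only [e1, Real.one_rpow, mul_one] at step1
      rw [hP.2, Real.one_rpow, mul_one] at step1
      have step2 := Real.rpow_le_rpow (hh_nn y) step1 (by norm_num : (0:ℝ) ≤ 2)
      rw [h2]
      refine le_trans step2 (le_of_eq ?_)
      rw [← Real.rpow_mul (ha_nn y)]
      congr 1
      rw [hθ]; field_simp
    have hSh_le : Sh ≤ Sa := Finset.sum_le_sum fun y _ => hy y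
    have hlog1 : Real.log Sh ≤ Real.log Sa := Real.log_le_log hSh0 hSh_le
    nlinarith

private lemma info_half_eq (W : X → Y → ℝ) (P : X → ℝ) :
    renyiInfo (1/2) P W =
      -Real.log (∑ y, (∑ x, P x * W x y ^ ((1:ℝ)/2)) ^ ((1:ℝ)/2)⁻¹) := by
  simp only [renyiInfo]
  rw [if_neg (by norm_num : (1/2 : ℝ) ≠ 1)]
  have h : ((1:ℝ)/2) / ((1:ℝ)/2 - 1) = -1 := by norm_num
  rw [h, neg_one_mul]

private lemma info_half_nonneg (W : X → Y → ℝ) (hW : ∀ x, IsPMF (W x)) (P : X → ℝ)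
    (hP : IsPMF P) : 0 ≤ renyiInfo (1/2) P W := by
  rw [info_half_eq]
  have h0 := S_pos W hW P hP (by norm_num : (0:ℝ) < 1/2)
  have h1 := S_le_one W hW P hP (by norm_num : (0:ℝ) < 1/2) (by norm_num)
  have := Real.log_nonpos h0.le h1
  linarith

private lemma bdd_half (W : X → Y → ℝ) (hW : ∀ x, IsPMF (W x)) [Nonempty X] :
    BddAbove {c | ∃ P : X → ℝ, IsPMF P ∧ c = renyiInfo (1/2) P W} := by
  refine ⟨2 * Real.log (Fintype.card X), ?_⟩
  rintro c ⟨P, hP, rfl⟩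
  have hcard : (0:ℝ) < (Fintype.card X : ℝ) := by
    exact_mod_cast Fintype.card_pos
  obtain ⟨x₀, -, hx₀⟩ : ∃ x ∈ univ, ((Fintype.card X : ℝ))⁻¹ ≤ P x := by
    apply Finset.exists_le_of_sum_le Finset.univ_nonempty
    rw [Finset.sum_const, nsmul_eq_mul, Finset.card_univ, mul_inv_cancel₀ hcard.ne', hP.2]
  set Sh : ℝ := ∑ y, (∑ x, P x * W x y ^ ((1:ℝ)/2)) ^ ((1:ℝ)/2)⁻¹ with hSh
  have h2 : ((1:ℝ)/2)⁻¹ = (2:ℝ) := by norm_num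
  have hSh_ge : ((Fintype.card X : ℝ))⁻¹ ^ (2:ℝ) ≤ Sh := by
    have hy : ∀ y, P x₀ ^ (2:ℝ) * W x₀ y ≤
        (∑ x, P x * W x y ^ ((1:ℝ)/2)) ^ ((1:ℝ)/2)⁻¹ := by
      intro y
      have h1 : P x₀ * W x₀ y ^ ((1:ℝ)/2) ≤ ∑ x, P x * W x y ^ ((1:ℝ)/2) :=
        Finset.single_le_sum
          (fun x _ => mul_nonneg (hP.1 x) (Real.rpow_nonneg ((hW x).1 y) _))
          (Finset.mem_univ x₀)
      have hpn : 0 ≤ P x₀ * W x₀ y ^ ((1:ℝ)/2) :=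
        mul_nonneg (hP.1 x₀) (Real.rpow_nonneg ((hW x₀).1 y) _)
      have h2' := Real.rpow_le_rpow hpn h1 (by norm_num : (0:ℝ) ≤ 2)
      rw [h2]
      refine le_trans (le_of_eq ?_) h2'
      rw [Real.mul_rpow (hP.1 x₀) (Real.rpow_nonneg ((hW x₀).1 y) _),
        ← Real.rpow_mul ((hW x₀).1 y)]
      norm_num
    have hsum : ∑ y, P x₀ ^ (2:ℝ) * W x₀ y ≤ Sh := Finset.sum_le_sum fun y _ => hy y
    rw [← Finset.mul_sum, (hW x₀).2, mul_one] at hsum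
    exact le_trans (Real.rpow_le_rpow (inv_nonneg.2 hcard.le) hx₀ (by norm_num)) hsum
  rw [info_half_eq, ← hSh]
  have hlog_ge : Real.log (((Fintype.card X : ℝ))⁻¹ ^ (2:ℝ)) ≤ Real.log Sh :=
    Real.log_le_log (Real.rpow_pos_of_pos (inv_pos.2 hcard) _) hSh_ge
  rw [Real.log_rpow (inv_pos.2 hcard), Real.log_inv] at hlog_ge
  linarith

end AuxRenyi

/-- `C_α(W) ≤ C_{1/2}(W)/(1-α)` for `α ∈ (0,1)`. -/
theorem renyiCap_le_half_capacity {X Y : Type*} [Fintype X] [Fintype Y] [Nonempty X]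
    (W : X → Y → ℝ) (hW : ∀ x, IsPMF (W x)) (α : ℝ) (hα : α ∈ Set.Ioo (0:ℝ) 1) :
    renyiCap α W ≤ renyiCap (1/2) W / (1 - α) := by
  obtain ⟨hα0, hα1⟩ := hα
  have h1α : (0:ℝ) < 1 - α := by linarith
  have hbdd := bdd_half W hW
  have hcap0 : 0 ≤ renyiCap (1/2) W := by
    have hcard : (0:ℝ) < (Fintype.card X : ℝ) := by exact_mod_cast Fintype.card_pos
    have hP₀ : IsPMF (fun _ : X => (Fintype.card X : ℝ)⁻¹) := by
      refine ⟨fun _ => by positivity, ?_⟩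
      rw [Finset.sum_const, nsmul_eq_mul, Finset.card_univ, mul_inv_cancel₀ hcard.ne']
    have hmem : renyiInfo (1/2) (fun _ : X => (Fintype.card X : ℝ)⁻¹) W ∈
        {c | ∃ P : X → ℝ, IsPMF P ∧ c = renyiInfo (1/2) P W} := ⟨_, hP₀, rfl⟩
    exact le_trans (info_half_nonneg W hW _ hP₀) (le_csSup hbdd hmem)
  apply Real.sSup_le _ (div_nonneg hcap0 h1α.le)
  rintro c ⟨P, hP, rfl⟩
  rw [le_div_iff₀ h1α]
  set Sa : ℝ := ∑ y, (∑ x, P x * W x y ^ α) ^ α⁻¹ with hSa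
  set Sh : ℝ := ∑ y, (∑ x, P x * W x y ^ ((1:ℝ)/2)) ^ ((1:ℝ)/2)⁻¹ with hSh
  have hI : renyiInfo α P W = (α / (α - 1)) * Real.log Sa := by
    simp only [renyiInfo]
    rw [if_neg hα1.ne]
  have hkey : Real.log Sh ≤ α * Real.log Sa := key_log W hW P hP hα0 hα1
  have hle_cap : renyiInfo (1/2) P W ≤ renyiCap (1/2) W :=
    le_csSup hbdd ⟨P, hP, rfl⟩
  rw [info_half_eq, ← hSh] at hle_cap
  have heq : renyiInfo α P W * (1 - α) = -(α * Real.log Sa) := by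
    rw [hI]
    have hne : α - 1 ≠ 0 := by linarith
    field_simp
    ring
  rw [heq]
  linarith
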